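/- Let X be a pointed metric space. Then on Lip₀(X) one has τ₀ ⊆ τ_γ ⊆ τ_Lip (the Lipschitz-norm topology), and τ_γ is the largest locally convex topology on Lip₀(X) which coincides with τ₀ on each norm-bounded subset of Lip₀(X). -/

import Mathlib

open Filter Topology Set Pointwise

set_option linter.unusedSectionVars false
set_option linter.unusedVariables false

noncomputable section

namespace LipApprox

variable (X : Type*) [MetricSpace X] (x₀ : X)
variable (F : Type*) [NormedAddCommGroup F] [NormedSpace ℝ F]

/-- The Lipschitz maps `X → F` vanishing at the base point, as a submodule of `X → F`. -/
def lip0Submodule : Submodule ℝ (X → F) where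
  carrier := {f | (∃ K, LipschitzWith K f) ∧ f x₀ = 0}
  add_mem' := by
    rintro f g ⟨⟨Kf, hf⟩, hf0⟩ ⟨⟨Kg, hg⟩, hg0⟩
    exact ⟨⟨Kf + Kg, hf.add hg⟩, by simp [hf0, hg0]⟩
  zero_mem' := ⟨⟨0, LipschitzWith.const 0⟩, rfl⟩
  smul_mem' := by
    rintro c f ⟨⟨K, hf⟩, hf0⟩
    exact ⟨⟨‖c‖₊ * K, (lipschitzWith_smul c).comp hf⟩, by simp [hf0]⟩

/-- The space `Lip₀(X, F)` of Lipschitz maps from `X` to `F` vanishing at the base point. -/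
def lip0 : Type _ := ↥(lip0Submodule X x₀ F)

instance : AddCommGroup (lip0 X x₀ F) :=
  inferInstanceAs (AddCommGroup ↥(lip0Submodule X x₀ F))

instance : Module ℝ (lip0 X x₀ F) :=
  inferInstanceAs (Module ℝ ↥(lip0Submodule X x₀ F))

variable {X x₀ F}

/-- The underlying function of an element of `Lip₀(X, F)`. -/
def toFun' (f : lip0 X x₀ F) : X → F := f.1

lemma exists_lip (f : lip0 X x₀ F) : ∃ K, LipschitzWith K (toFun' f) := f.2.1

lemma apply_base (f : lip0 X x₀ F) : toFun' f x₀ = 0 := f.2.2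

lemma toFun'_add (f g : lip0 X x₀ F) : toFun' (f + g) = toFun' f + toFun' g := rfl
lemma toFun'_neg (f : lip0 X x₀ F) : toFun' (-f) = -toFun' f := rfl
lemma toFun'_smul (c : ℝ) (f : lip0 X x₀ F) : toFun' (c • f) = c • toFun' f := rfl
lemma toFun'_zero : toFun' (0 : lip0 X x₀ F) = 0 := rfl

variable (X x₀ F) in
/-- The Lipschitz norm of an element of `Lip₀(X, F)`. -/
def lipNorm (f : lip0 X x₀ F) : ℝ :=
  ⨆ p : X × X, ‖toFun' f p.1 - toFun' f p.2‖ / dist p.1 p.2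

lemma ratio_le (f : lip0 X x₀ F) {K : NNReal} (hK : LipschitzWith K (toFun' f))
    (p : X × X) : ‖toFun' f p.1 - toFun' f p.2‖ / dist p.1 p.2 ≤ K := by
  rcases eq_or_ne p.1 p.2 with h | h
  · simp [h]
  · rw [div_le_iff₀ (dist_pos.2 h), ← dist_eq_norm]
    exact hK.dist_le_mul p.1 p.2

lemma bddAbove_ratio (f : lip0 X x₀ F) :
    BddAbove (Set.range fun p : X × X =>
      ‖toFun' f p.1 - toFun' f p.2‖ / dist p.1 p.2) := by
  obtain ⟨K, hK⟩ := exists_lip f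
  exact ⟨K, by rintro r ⟨p, rfl⟩; exact ratio_le f hK p⟩

lemma nonempty_pairs (x₀ : X) : Nonempty (X × X) := ⟨(x₀, x₀)⟩

lemma ratio_le_lipNorm (f : lip0 X x₀ F) (p : X × X) :
    ‖toFun' f p.1 - toFun' f p.2‖ / dist p.1 p.2 ≤ lipNorm X x₀ F f :=
  le_ciSup (bddAbove_ratio f) p

lemma lipNorm_nonneg (f : lip0 X x₀ F) : 0 ≤ lipNorm X x₀ F f := by
  have := ratio_le_lipNorm (x₀ := x₀) f (x₀, x₀)
  simpa using this

lemma norm_sub_le_lipNorm (f : lip0 X x₀ F) (x y : X) :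
    ‖toFun' f x - toFun' f y‖ ≤ lipNorm X x₀ F f * dist x y := by
  rcases eq_or_ne x y with rfl | h
  · simp
  · have := ratio_le_lipNorm (x₀ := x₀) f (x, y)
    rw [div_le_iff₀ (dist_pos.2 h)] at this
    simpa using this

instance : NormedAddCommGroup (lip0 X x₀ F) :=
  AddGroupNorm.toNormedAddCommGroup
    { toFun := lipNorm X x₀ F
      map_zero' := by
        haveI : Nonempty (X × X) := nonempty_pairs x₀
        have h0 : ∀ p : X × X,
            ‖toFun' (0 : lip0 X x₀ F) p.1 - toFun' (0 : lip0 X x₀ F) p.2‖ /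
              dist p.1 p.2 = 0 := by
          intro p; rw [toFun'_zero]; simp
        simp only [lipNorm, h0, ciSup_const]
      add_le' := by
        intro f g
        haveI : Nonempty (X × X) := nonempty_pairs x₀
        apply ciSup_le
        intro p
        rcases eq_or_ne p.1 p.2 with h | h
        · simp only [h, dist_self, div_zero]
          exact add_nonneg (lipNorm_nonneg f) (lipNorm_nonneg g)
        · have hnum : ‖toFun' (f + g) p.1 - toFun' (f + g) p.2‖ ≤
              ‖toFun' f p.1 - toFun' f p.2‖ + ‖toFun' g p.1 - toFun' g p.2‖ := by
            rw [toFun'_add, Pi.add_apply, Pi.add_apply, add_sub_add_comm]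
            exact norm_add_le _ _
          calc ‖toFun' (f + g) p.1 - toFun' (f + g) p.2‖ / dist p.1 p.2
              ≤ (‖toFun' f p.1 - toFun' f p.2‖ +
                  ‖toFun' g p.1 - toFun' g p.2‖) / dist p.1 p.2 := by gcongr
            _ = ‖toFun' f p.1 - toFun' f p.2‖ / dist p.1 p.2 +
                  ‖toFun' g p.1 - toFun' g p.2‖ / dist p.1 p.2 := add_div _ _ _
            _ ≤ lipNorm X x₀ F f + lipNorm X x₀ F g :=
                add_le_add (ratio_le_lipNorm f p) (ratio_le_lipNorm g p)
      neg' := by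
        intro f
        simp only [lipNorm]
        congr 1
        funext p
        congr 1
        rw [toFun'_neg, Pi.neg_apply, Pi.neg_apply, neg_sub_neg, norm_sub_rev]
      eq_zero_of_map_eq_zero' := by
        intro f hf
        have hzero : ∀ x : X, toFun' f x = 0 := by
          intro x
          rcases eq_or_ne x x₀ with h | h
          · rw [h]; exact apply_base f
          · have hf' : lipNorm X x₀ F f = 0 := hf
            have h1 := ratio_le_lipNorm (x₀ := x₀) f (x, x₀)
            rw [hf', div_le_iff₀ (dist_pos.2 h), zero_mul] at h1
            have h2 : toFun' f x - toFun' f x₀ = 0 := by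
              simpa using norm_le_zero_iff.1 h1
            have h3 := apply_base f
            rw [h3, sub_zero] at h2
            exact h2
        exact Subtype.ext (funext hzero) }

lemma lip0_norm_def (f : lip0 X x₀ F) : ‖f‖ = lipNorm X x₀ F f := rfl

instance : NormedSpace ℝ (lip0 X x₀ F) where
  norm_smul_le c f := by
    haveI : Nonempty (X × X) := nonempty_pairs x₀
    rw [lip0_norm_def, lip0_norm_def, lipNorm]
    apply ciSup_le
    intro p
    have h1 : toFun' (c • f) p.1 - toFun' (c • f) p.2 =
        c • (toFun' f p.1 - toFun' f p.2) := by
      rw [toFun'_smul, Pi.smul_apply, Pi.smul_apply, smul_sub]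
    rw [h1, norm_smul]
    rcases eq_or_ne p.1 p.2 with h | h
    · simp only [h, dist_self, div_zero]
      exact mul_nonneg (norm_nonneg c) (lipNorm_nonneg f)
    · rw [mul_div_assoc]
      exact mul_le_mul_of_nonneg_left (ratio_le_lipNorm (x₀ := x₀) f p) (norm_nonneg c)

variable (X x₀ F)

/-- Elements of `Lip₀(X, F)` as continuous maps. -/
def toCM (f : lip0 X x₀ F) : C(X, F) :=
  ⟨toFun' f, by
    obtain ⟨K, hK⟩ := exists_lip f
    exact hK.continuous⟩

/-- The compact-open topology `τ₀` on `Lip₀(X, F)`. -/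
def tau0 : TopologicalSpace (lip0 X x₀ F) :=
  TopologicalSpace.induced (toCM X x₀ F) ContinuousMap.compactOpen

/-- The set `γ(U) = ⋃ₙ (U₀ ∩ B + U₁ ∩ 2B + ⋯ + Uₙ ∩ 2ⁿB)` from the definition of the
mixed topology, where `B` is the closed unit ball of `Lip₀(X, F)`. -/
def gammaSet (U : ℕ → Set (lip0 X x₀ F)) : Set (lip0 X x₀ F) :=
  ⋃ n : ℕ, ∑ i ∈ Finset.range (n + 1), (U i ∩ {f | ‖f‖ ≤ 2 ^ i})

/-- The mixed topology `τ_γ = γ[Lip, τ₀]` on `Lip₀(X, F)`: the topology whose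
neighborhoods of a point `f` are generated by the translates by `f` of the sets `γ(U)`,
where `U` runs over all sequences of convex balanced `τ₀`-neighborhoods of zero. -/
def tauGamma : TopologicalSpace (lip0 X x₀ F) :=
  TopologicalSpace.mkOfNhds fun f =>
    ⨅ (U : ℕ → Set (lip0 X x₀ F))
      (_ : ∀ n, U n ∈ @nhds _ (tau0 X x₀ F) 0 ∧ Convex ℝ (U n) ∧ Balanced ℝ (U n)),
      Filter.principal ((f + ·) '' gammaSet X x₀ F U)

/-- A subset of `Lip₀(X, F)` is norm bounded if the Lipschitz norms of its members are
uniformly bounded. -/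
def NormBounded (B : Set (lip0 X x₀ F)) : Prop :=
  ∃ C : ℝ, ∀ f ∈ B, ‖f‖ ≤ C

/-- The locally convex topology `γτ_γ` on `Lip₀(X, F)`, generated by the seminorms
`f ↦ sup_n αₙ ‖f xₙ - f yₙ‖ / d(xₙ, yₙ)` where `(αₙ)` is a sequence of positive reals
tending to zero and `((xₙ, yₙ))` is a sequence of pairs of distinct points of `X`. -/
def gammaTauGamma : TopologicalSpace (lip0 X x₀ F) :=
  ⨅ (α : ℕ → ℝ) (z : ℕ → X × X)
    (_ : (∀ n, 0 < α n) ∧ Filter.Tendsto α Filter.atTop (nhds 0) ∧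
      ∀ n, (z n).1 ≠ (z n).2),
    TopologicalSpace.induced
      (fun f => UniformFun.ofFun fun n =>
        (α n / dist (z n).1 (z n).2) • (toFun' f (z n).1 - toFun' f (z n).2))
      inferInstance

/-- Evaluation at a point of `X`, as a linear functional on `Lip₀(X)`. -/
def evalLM (x : X) : lip0 X x₀ ℝ →ₗ[ℝ] ℝ where
  toFun f := toFun' f x
  map_add' f g := rfl
  map_smul' c f := rfl

/-- Evaluation at a point of `X`, as a continuous linear functional on `Lip₀(X)`. -/
def evalCLM (x : X) : lip0 X x₀ ℝ →L[ℝ] ℝ :=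
  LinearMap.mkContinuous (evalLM X x₀ x) (dist x x₀)
    (fun f => by
      have h0 : toFun' f x₀ = 0 := apply_base f
      have h := norm_sub_le_lipNorm (x₀ := x₀) f x x₀
      rw [h0, sub_zero] at h
      calc ‖evalLM X x₀ x f‖ ≤ lipNorm X x₀ ℝ f * dist x x₀ := h
        _ = dist x x₀ * ‖f‖ := by rw [lip0_norm_def, mul_comm])

/-- The Lipschitz-free space `F(X)`: the closed linear span of the evaluation
functionals inside the dual of `Lip₀(X)`. -/
def freeSpace : Submodule ℝ (lip0 X x₀ ℝ →L[ℝ] ℝ) :=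
  (Submodule.span ℝ (Set.range (evalCLM X x₀))).topologicalClosure

/-- The Dirac map `δ : X → F(X)`. -/
def deltaF (x : X) : freeSpace X x₀ :=
  ⟨evalCLM X x₀ x,
    Submodule.le_topologicalClosure _ (Submodule.subset_span (Set.mem_range_self x))⟩

/-- For a normed space `G`, the topology on the dual `G'` of uniform convergence on the
convex balanced compact subsets of `G` (the topology of `G'_c`). -/
def dualcTop (G : Type*) [NormedAddCommGroup G] [NormedSpace ℝ G] :
    TopologicalSpace (G →L[ℝ] ℝ) :=
  TopologicalSpace.induced
    (fun φ => UniformOnFun.ofFun {L : Set G | IsCompact L ∧ Convex ℝ L ∧ Balanced ℝ L} ⇑φ)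
    inferInstance


section Aux

variable {X : Type*} [MetricSpace X] {x₀ : X}

/-- Admissible sequences of `τ₀`-neighborhoods of zero. -/
def Adm (X : Type*) [MetricSpace X] (x₀ : X) (U : ℕ → Set (lip0 X x₀ ℝ)) : Prop :=
  ∀ n, U n ∈ @nhds _ (tau0 X x₀ ℝ) 0 ∧ Convex ℝ (U n) ∧ Balanced ℝ (U n)

/-- The filter of `τ_γ`-neighborhoods of `f`. -/
def nG (X : Type*) [MetricSpace X] (x₀ : X) (f : lip0 X x₀ ℝ) : Filter (lip0 X x₀ ℝ) :=
  ⨅ (U : ℕ → Set (lip0 X x₀ ℝ)) (_ : Adm X x₀ U),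
    Filter.principal ((f + ·) '' gammaSet X x₀ ℝ U)

lemma tauGamma_eq_mkOfNhds :
    tauGamma X x₀ ℝ = TopologicalSpace.mkOfNhds (nG X x₀) := rfl

/-- The basic `τ₀`-neighborhoods of zero. -/
def cN (x₀ : X) (K : Set X) (ε : ℝ) : Set (lip0 X x₀ ℝ) :=
  {f | ∀ x ∈ K, |toFun' f x| ≤ ε}

lemma cN_convex (K : Set X) (ε : ℝ) : Convex ℝ (cN x₀ K ε) := by
  intro f hf g hg a b ha hb hab x hx
  have : toFun' (a • f + b • g) x = a * toFun' f x + b * toFun' g x := rfl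
  rw [this]
  calc |a * toFun' f x + b * toFun' g x| ≤ |a * toFun' f x| + |b * toFun' g x| := abs_add_le _ _
    _ = a * |toFun' f x| + b * |toFun' g x| := by
        rw [abs_mul, abs_mul, abs_of_nonneg ha, abs_of_nonneg hb]
    _ ≤ a * ε + b * ε := by
        gcongr
        · exact hf x hx
        · exact hg x hx
    _ = ε := by rw [← add_mul, hab, one_mul]

lemma cN_balanced (K : Set X) (ε : ℝ) : Balanced ℝ (cN x₀ K ε) := by
  intro a ha g hg
  obtain ⟨f, hf, rfl⟩ := hg
  intro x hx
  have : toFun' (a • f) x = a * toFun' f x := rfl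
  rw [this, abs_mul]
  calc |a| * |toFun' f x| ≤ 1 * ε := by
        refine mul_le_mul ?_ (hf x hx) (abs_nonneg _) zero_le_one
        simpa using ha
    _ = ε := one_mul ε

/-- The canonical map to continuous maps, as an additive monoid hom. -/
def toCMHom (X : Type*) [MetricSpace X] (x₀ : X) : lip0 X x₀ ℝ →+ C(X, ℝ) where
  toFun := toCM X x₀ ℝ
  map_zero' := rfl
  map_add' _ _ := rfl

lemma tau0_eq_induced : tau0 X x₀ ℝ =
    TopologicalSpace.induced (toCMHom X x₀) ContinuousMap.compactOpen := rfl

lemma tau0_topologicalAddGroup :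
    @IsTopologicalAddGroup (lip0 X x₀ ℝ) (tau0 X x₀ ℝ) _ := by
  rw [tau0_eq_induced]
  exact topologicalAddGroup_induced (toCMHom X x₀)

lemma tau0_hasBasis_zero :
    (@nhds _ (tau0 X x₀ ℝ) 0).HasBasis
      (fun p : Set X × ℝ => IsCompact p.1 ∧ 0 < p.2) (fun p => cN x₀ p.1 p.2) := by
  have hb : (nhds (0 : C(X, ℝ))).HasBasis (fun p : Set X × ℝ => IsCompact p.1 ∧ 0 < p.2)
      (fun p => {g : C(X, ℝ) | ∀ x ∈ p.1, dist ((0 : C(X, ℝ)) x) (g x) ≤ p.2}) :=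
    nhds_basis_uniformity' (Metric.uniformity_basis_dist_le.compactConvergenceUniformity)
  have : @nhds _ (tau0 X x₀ ℝ) 0 = Filter.comap (toCM X x₀ ℝ) (nhds (0 : C(X, ℝ))) := by
    rw [show (tau0 X x₀ ℝ) = TopologicalSpace.induced (toCM X x₀ ℝ)
      ContinuousMap.compactOpen from rfl]
    rw [nhds_induced]
    rfl
  rw [this]
  refine (hb.comap _).congr (fun p => Iff.rfl) ?_
  intro p hp
  ext f
  simp only [Set.mem_preimage, Set.mem_setOf_eq, cN]
  refine forall₂_congr fun x hx => ?_
  rw [show ((0 : C(X, ℝ)) x) = 0 from rfl, dist_comm, Real.dist_0_eq_abs]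
  rfl

lemma cN_mem_nhds {K : Set X} {ε : ℝ} (hK : IsCompact K) (hε : 0 < ε) :
    cN x₀ K ε ∈ @nhds _ (tau0 X x₀ ℝ) 0 :=
  tau0_hasBasis_zero.mem_of_mem (i := (K, ε)) ⟨hK, hε⟩

lemma exists_cN_subset {s : Set (lip0 X x₀ ℝ)} (hs : s ∈ @nhds _ (tau0 X x₀ ℝ) 0) :
    ∃ K ε, IsCompact K ∧ 0 < ε ∧ cN x₀ K ε ⊆ s := by
  obtain ⟨⟨K, ε⟩, ⟨hK, hε⟩, hsub⟩ := tau0_hasBasis_zero.mem_iff.1 hs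
  exact ⟨K, ε, hK, hε, hsub⟩

lemma toFun'_sum (s : Finset ℕ) (g : ℕ → lip0 X x₀ ℝ) (x : X) :
    toFun' (∑ i ∈ s, g i) x = ∑ i ∈ s, toFun' (g i) x :=
  map_sum (evalLM X x₀ x) g s

lemma mem_gammaSet_of {U : ℕ → Set (lip0 X x₀ ℝ)} (n : ℕ) (g : ℕ → lip0 X x₀ ℝ)
    (hg : ∀ i, i ≤ n → g i ∈ U i ∧ ‖g i‖ ≤ 2 ^ i) :
    (∑ i ∈ Finset.range (n + 1), g i) ∈ gammaSet X x₀ ℝ U := by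
  refine Set.mem_iUnion.2 ⟨n, ?_⟩
  rw [Set.mem_finset_sum]
  refine ⟨g, fun {i} hi => ?_, rfl⟩
  rw [Finset.mem_range] at hi
  obtain ⟨h1, h2⟩ := hg i (by omega)
  exact ⟨h1, h2⟩

lemma gammaSet_rec {U : ℕ → Set (lip0 X x₀ ℝ)} {h : lip0 X x₀ ℝ}
    (hh : h ∈ gammaSet X x₀ ℝ U) :
    ∃ (n : ℕ) (g : ℕ → lip0 X x₀ ℝ), (∀ i, i ≤ n → g i ∈ U i ∧ ‖g i‖ ≤ 2 ^ i) ∧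
      h = ∑ i ∈ Finset.range (n + 1), g i := by
  obtain ⟨n, hn⟩ := Set.mem_iUnion.1 hh
  rw [Set.mem_finset_sum] at hn
  obtain ⟨g, hg, hsum⟩ := hn
  refine ⟨n, g, fun i hi => ?_, hsum.symm⟩
  exact hg (Finset.mem_range.2 (by omega))

lemma zero_mem_of_adm {U : ℕ → Set (lip0 X x₀ ℝ)} (hU : Adm X x₀ U) (i : ℕ) :
    (0 : lip0 X x₀ ℝ) ∈ U i := by
  obtain ⟨K, ε, hK, hε, hsub⟩ := exists_cN_subset (hU i).1
  exact hsub (fun x hx => by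
    rw [show toFun' (0 : lip0 X x₀ ℝ) x = 0 from rfl, abs_zero]; exact le_of_lt hε)

lemma gammaSet_rec' {U : ℕ → Set (lip0 X x₀ ℝ)} (hU : Adm X x₀ U) {h : lip0 X x₀ ℝ}
    (hh : h ∈ gammaSet X x₀ ℝ U) :
    ∃ n₀, ∀ n, n₀ ≤ n → ∃ g : ℕ → lip0 X x₀ ℝ,
      (∀ i, i ≤ n → g i ∈ U i ∧ ‖g i‖ ≤ 2 ^ i) ∧
      h = ∑ i ∈ Finset.range (n + 1), g i := by
  obtain ⟨n₀, g, hg, rfl⟩ := gammaSet_rec hh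
  refine ⟨n₀, fun n hn => ⟨fun i => if i ≤ n₀ then g i else 0, fun i hi => ?_, ?_⟩⟩
  · by_cases hin : i ≤ n₀
    · simpa [hin] using hg i hin
    · simp only [hin, if_false]
      exact ⟨zero_mem_of_adm hU i, by rw [norm_zero]; positivity⟩
  · have h1 : ∑ i ∈ Finset.range (n + 1), (if i ≤ n₀ then g i else 0)
        = ∑ i ∈ Finset.range (n₀ + 1), (if i ≤ n₀ then g i else 0) :=
      (Finset.sum_subset (Finset.range_subset_range.2 (by omega)) (fun i _ hi => by
        rw [Finset.mem_range] at hi; simp [show ¬ i ≤ n₀ by omega])).symm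
    rw [h1]
    exact Finset.sum_congr rfl fun i hi => by
      rw [Finset.mem_range] at hi; simp [show i ≤ n₀ by omega]

lemma zero_mem_gammaSet {U : ℕ → Set (lip0 X x₀ ℝ)} (hU : Adm X x₀ U) :
    (0 : lip0 X x₀ ℝ) ∈ gammaSet X x₀ ℝ U := by
  have := mem_gammaSet_of (U := U) 0 (fun _ => 0)
    (fun i _ => ⟨zero_mem_of_adm hU i, by rw [norm_zero]; positivity⟩)
  simpa using this

lemma single_mem_gammaSet {U : ℕ → Set (lip0 X x₀ ℝ)} (hU : Adm X x₀ U) (m : ℕ)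
    {f : lip0 X x₀ ℝ} (hf : f ∈ U m) (hfn : ‖f‖ ≤ 2 ^ m) :
    f ∈ gammaSet X x₀ ℝ U := by
  have := mem_gammaSet_of (U := U) m (fun i => if i = m then f else 0) (fun i hi => by
    by_cases him : i = m
    · subst him; simpa using ⟨hf, hfn⟩
    · simp only [him, if_false]
      exact ⟨zero_mem_of_adm hU i, by rw [norm_zero]; positivity⟩)
  rwa [Finset.sum_ite_eq' (Finset.range (m + 1)) m,
    if_pos (Finset.self_mem_range_succ m)] at this

lemma gammaSet_mono {U V : ℕ → Set (lip0 X x₀ ℝ)} (hUV : ∀ n, U n ⊆ V n) :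
    gammaSet X x₀ ℝ U ⊆ gammaSet X x₀ ℝ V := by
  intro h hh
  obtain ⟨n, g, hg, rfl⟩ := gammaSet_rec hh
  exact mem_gammaSet_of n g fun i hi => ⟨hUV i (hg i hi).1, (hg i hi).2⟩

lemma gammaSet_convex {U : ℕ → Set (lip0 X x₀ ℝ)} (hU : Adm X x₀ U) :
    Convex ℝ (gammaSet X x₀ ℝ U) := by
  intro p hp q hq a b ha hb hab
  obtain ⟨n₀, hp'⟩ := gammaSet_rec' hU hp
  obtain ⟨m₀, hq'⟩ := gammaSet_rec' hU hq
  obtain ⟨g, hg, rfl⟩ := hp' (max n₀ m₀) (le_max_left _ _)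
  obtain ⟨k, hk, rfl⟩ := hq' (max n₀ m₀) (le_max_right _ _)
  rw [Finset.smul_sum, Finset.smul_sum, ← Finset.sum_add_distrib]
  refine mem_gammaSet_of _ _ fun i hi => ⟨?_, ?_⟩
  · exact (hU i).2.1 (hg i hi).1 (hk i hi).1 ha hb hab
  · calc ‖a • g i + b • k i‖ ≤ ‖a • g i‖ + ‖b • k i‖ := norm_add_le _ _
      _ = a * ‖g i‖ + b * ‖k i‖ := by
          rw [norm_smul, norm_smul, Real.norm_eq_abs, Real.norm_eq_abs,
            abs_of_nonneg ha, abs_of_nonneg hb]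
      _ ≤ a * 2 ^ i + b * 2 ^ i := by
          gcongr
          · exact (hg i hi).2
          · exact (hk i hi).2
      _ = 2 ^ i := by rw [← add_mul, hab, one_mul]

lemma gammaSet_balanced {U : ℕ → Set (lip0 X x₀ ℝ)} (hU : Adm X x₀ U) :
    Balanced ℝ (gammaSet X x₀ ℝ U) := by
  intro a ha p hp
  obtain ⟨q, hq, rfl⟩ := hp
  obtain ⟨n, g, hg, rfl⟩ := gammaSet_rec hq
  show a • (∑ i ∈ Finset.range (n + 1), g i) ∈ gammaSet X x₀ ℝ U
  rw [Finset.smul_sum]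
  refine mem_gammaSet_of _ _ fun i hi => ⟨?_, ?_⟩
  · exact (hU i).2.2.smul_mem (by simpa using ha) (hg i hi).1
  · calc ‖a • g i‖ = ‖a‖ * ‖g i‖ := norm_smul _ _
      _ ≤ 1 * 2 ^ i := mul_le_mul ha (hg i hi).2 (norm_nonneg _) zero_le_one
      _ = 2 ^ i := one_mul _

lemma smul_cN {c : ℝ} (hc : c ≠ 0) (K : Set X) (ε : ℝ) :
    c • (cN x₀ K ε) = cN x₀ K (|c| * ε) := by
  ext f
  rw [Set.mem_smul_set_iff_inv_smul_mem₀ hc]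
  constructor
  · intro hf x hx
    have h1 := hf x hx
    have h2 : toFun' (c⁻¹ • f) x = c⁻¹ * toFun' f x := rfl
    rw [h2, abs_mul, abs_inv] at h1
    calc |toFun' f x| = |c| * (|c|⁻¹ * |toFun' f x|) := by
          field_simp
      _ ≤ |c| * ε := by gcongr
  · intro hf x hx
    have h2 : toFun' (c⁻¹ • f) x = c⁻¹ * toFun' f x := rfl
    rw [h2, abs_mul, abs_inv]
    have h1 := hf x hx
    rw [inv_mul_le_iff₀ (abs_pos.2 hc)]
    linarith [h1]

lemma smul_mem_tau0 {c : ℝ} (hc : c ≠ 0) {A : Set (lip0 X x₀ ℝ)}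
    (hA : A ∈ @nhds _ (tau0 X x₀ ℝ) 0) : c • A ∈ @nhds _ (tau0 X x₀ ℝ) 0 := by
  obtain ⟨K, ε, hK, hε, hsub⟩ := exists_cN_subset hA
  refine Filter.mem_of_superset (cN_mem_nhds hK (by positivity : 0 < |c| * ε)) ?_
  rw [← smul_cN hc]
  exact Set.smul_set_mono hsub

/-- Halving an admissible sequence. -/
def halve (U : ℕ → Set (lip0 X x₀ ℝ)) : ℕ → Set (lip0 X x₀ ℝ) :=
  fun n => (2⁻¹ : ℝ) • (U n ∩ U (n + 1))

lemma Adm.inter {U V : ℕ → Set (lip0 X x₀ ℝ)} (hU : Adm X x₀ U) (hV : Adm X x₀ V) :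
    Adm X x₀ (fun n => U n ∩ V n) :=
  fun n => ⟨Filter.inter_mem (hU n).1 (hV n).1, (hU n).2.1.inter (hV n).2.1,
    (hU n).2.2.inter (hV n).2.2⟩

lemma Adm.smul {U : ℕ → Set (lip0 X x₀ ℝ)} (hU : Adm X x₀ U) {c : ℝ} (hc : c ≠ 0) :
    Adm X x₀ (fun n => c • U n) :=
  fun n => ⟨smul_mem_tau0 hc (hU n).1, (hU n).2.1.smul c, (hU n).2.2.smul c⟩

lemma Adm.halve {U : ℕ → Set (lip0 X x₀ ℝ)} (hU : Adm X x₀ U) :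
    Adm X x₀ (halve U) :=
  Adm.smul (U := fun n => U n ∩ U (n + 1))
    (fun n => ((hU.inter (fun m => hU (m + 1))) n)) (by norm_num)

lemma halve_add {U : ℕ → Set (lip0 X x₀ ℝ)} (hU : Adm X x₀ U)
    {a b : lip0 X x₀ ℝ} (ha : a ∈ gammaSet X x₀ ℝ (halve U))
    (hb : b ∈ gammaSet X x₀ ℝ (halve U)) : a + b ∈ gammaSet X x₀ ℝ U := by
  obtain ⟨n₀, ha'⟩ := gammaSet_rec' hU.halve ha
  obtain ⟨m₀, hb'⟩ := gammaSet_rec' hU.halve hb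
  obtain ⟨g, hg, rfl⟩ := ha' (max n₀ m₀) (le_max_left _ _)
  obtain ⟨k, hk, rfl⟩ := hb' (max n₀ m₀) (le_max_right _ _)
  set N := max n₀ m₀ with hN
  have key : ∀ i, i ≤ N → g i + k i ∈ U (i + 1) ∧ ‖g i + k i‖ ≤ 2 ^ (i + 1) := by
    intro i hi
    obtain ⟨hg1, hg2⟩ := hg i hi
    obtain ⟨hk1, hk2⟩ := hk i hi
    obtain ⟨g', hg', hgeq⟩ := hg1
    obtain ⟨k', hk', hkeq⟩ := hk1
    constructor
    · rw [← hgeq, ← hkeq]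
      exact (hU (i + 1)).2.1 hg'.2 hk'.2 (by norm_num) (by norm_num) (by norm_num)
    · calc ‖g i + k i‖ ≤ ‖g i‖ + ‖k i‖ := norm_add_le _ _
        _ ≤ 2 ^ i + 2 ^ i := add_le_add hg2 hk2
        _ = 2 ^ (i + 1) := by ring
  have hsum : (∑ i ∈ Finset.range (N + 1), g i) + ∑ i ∈ Finset.range (N + 1), k i
      = ∑ j ∈ Finset.range (N + 2), (fun j => if h : 1 ≤ j then g (j - 1) + k (j - 1) else 0) j := by
    rw [Finset.sum_range_succ' (fun j => if h : 1 ≤ j then g (j - 1) + k (j - 1) else 0) (N + 1)]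
    simp only [Nat.le_add_left, dif_pos, Nat.add_sub_cancel, dif_neg (by omega : ¬ 1 ≤ 0)]
    rw [Finset.sum_add_distrib, add_zero]
  rw [hsum]
  refine mem_gammaSet_of (N + 1) _ fun j hj => ?_
  by_cases hj1 : 1 ≤ j
  · simp only [hj1, dif_pos]
    obtain ⟨h1, h2⟩ := key (j - 1) (by omega)
    rw [show j - 1 + 1 = j by omega] at h1 h2
    exact ⟨h1, h2⟩
  · rw [dif_neg hj1]
    exact ⟨zero_mem_of_adm hU j, by rw [norm_zero]; positivity⟩

lemma sum_range_shift {M : Type*} [AddCommMonoid M] (F : ℕ → M) (k N : ℕ) :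
    ∑ j ∈ Finset.range (N + 1 + k), (if k ≤ j then F (j - k) else 0)
      = ∑ i ∈ Finset.range (N + 1), F i := by
  induction k with
  | zero => simp
  | succ k ih =>
    rw [show N + 1 + (k + 1) = (N + 1 + k) + 1 from rfl,
      Finset.sum_range_succ' (fun j => if k + 1 ≤ j then F (j - (k + 1)) else 0) (N + 1 + k)]
    have h1 : ∀ j, (if k + 1 ≤ j + 1 then F (j + 1 - (k + 1)) else 0)
        = (if k ≤ j then F (j - k) else 0) := by
      intro j
      by_cases h : k ≤ j
      · rw [if_pos (by omega), if_pos h, Nat.succ_sub_succ]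
      · rw [if_neg (by omega), if_neg h]
    calc (∑ j ∈ Finset.range (N + 1 + k), if k + 1 ≤ j + 1 then F (j + 1 - (k + 1)) else 0)
          + (if k + 1 ≤ 0 then F (0 - (k + 1)) else 0)
        = ∑ j ∈ Finset.range (N + 1 + k), (if k ≤ j then F (j - k) else 0) := by
          rw [if_neg (by omega), add_zero]
          exact Finset.sum_congr rfl fun j _ => h1 j
      _ = ∑ i ∈ Finset.range (N + 1), F i := ih

lemma gammaSet_smul_subset {U : ℕ → Set (lip0 X x₀ ℝ)} (hU : Adm X x₀ U)
    {c : ℝ} (hc : c ≠ 0) {k : ℕ} (hck : |c| ≤ 2 ^ k) {a : lip0 X x₀ ℝ}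
    (ha : a ∈ gammaSet X x₀ ℝ (fun i => c⁻¹ • U (i + k))) :
    c • a ∈ gammaSet X x₀ ℝ U := by
  obtain ⟨N, g, hg, rfl⟩ := gammaSet_rec ha
  have hsum : c • ∑ i ∈ Finset.range (N + 1), g i
      = ∑ j ∈ Finset.range (N + 1 + k), (if k ≤ j then c • g (j - k) else 0) := by
    rw [sum_range_shift (fun i => c • g i) k N, Finset.smul_sum]
  rw [hsum, show N + 1 + k = (N + k) + 1 by omega]
  refine mem_gammaSet_of (N + k) _ fun j hj => ?_
  by_cases hjk : k ≤ j
  · rw [if_pos hjk]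
    obtain ⟨h1, h2⟩ := hg (j - k) (by omega)
    obtain ⟨u, hu, hueq⟩ := h1
    constructor
    · have : c • g (j - k) = u := by rw [← hueq, smul_inv_smul₀ hc]
      rw [this]
      rwa [show j - k + k = j by omega] at hu
    · calc ‖c • g (j - k)‖ = |c| * ‖g (j - k)‖ := by
            rw [norm_smul, Real.norm_eq_abs]
        _ ≤ 2 ^ k * 2 ^ (j - k) := by
            exact mul_le_mul hck h2 (norm_nonneg _) (by positivity)
        _ = 2 ^ j := by rw [← pow_add]; congr 1; omega
  · rw [if_neg hjk]
    exact ⟨zero_mem_of_adm hU j, by rw [norm_zero]; positivity⟩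

lemma gammaSet_absorbs {U : ℕ → Set (lip0 X x₀ ℝ)} (hU : Adm X x₀ U)
    (f : lip0 X x₀ ℝ) : ∀ᶠ c in nhds (0 : ℝ), c • f ∈ gammaSet X x₀ ℝ U := by
  obtain ⟨m, hm⟩ := pow_unbounded_of_one_lt ‖f‖ (by norm_num : (1 : ℝ) < 2)
  obtain ⟨K, ε, hK, hε, hsub⟩ := exists_cN_subset (hU m).1
  obtain ⟨R, hR⟩ := (hK.isBounded).subset_closedBall x₀
  set D : ℝ := ‖f‖ * |R| + 1 with hD
  have hD1 : 1 ≤ D := by rw [hD, le_add_iff_nonneg_left]; positivity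
  have hDpos : 0 < D := by positivity
  set δ : ℝ := min 1 (ε / D) with hδ
  have hδpos : 0 < δ := lt_min one_pos (by positivity)
  have key : ∀ c : ℝ, |c| ≤ δ → c • f ∈ gammaSet X x₀ ℝ U := by
    intro c hc
    refine single_mem_gammaSet hU m (hsub ?_) ?_
    · intro x hx
      have hfx : |toFun' f x| ≤ ‖f‖ * |R| := by
        have h1 : |toFun' f x| ≤ ‖f‖ * dist x x₀ := by
          have := norm_sub_le_lipNorm (x₀ := x₀) f x x₀
          rw [apply_base f, sub_zero] at this
          simpa [lip0_norm_def] using this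
        have h2 : dist x x₀ ≤ |R| := le_trans (hR hx) (le_abs_self R)
        calc |toFun' f x| ≤ ‖f‖ * dist x x₀ := h1
          _ ≤ ‖f‖ * |R| := by gcongr
      have h3 : toFun' (c • f) x = c * toFun' f x := rfl
      rw [h3, abs_mul]
      calc |c| * |toFun' f x| ≤ (ε / D) * (‖f‖ * |R|) := by
            refine mul_le_mul (le_trans hc (min_le_right _ _)) hfx (abs_nonneg _) (by positivity)
        _ ≤ (ε / D) * D := by
            gcongr
            rw [hD]; linarith
        _ = ε := by field_simp
    · rw [norm_smul, Real.norm_eq_abs]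
      calc |c| * ‖f‖ ≤ 1 * ‖f‖ := by
            refine mul_le_mul (le_trans hc (min_le_left _ _)) le_rfl (norm_nonneg _) zero_le_one
        _ = ‖f‖ := one_mul _
        _ ≤ 2 ^ m := le_of_lt hm
  have : Metric.closedBall (0 : ℝ) δ ∈ nhds (0 : ℝ) := Metric.closedBall_mem_nhds 0 hδpos
  refine Filter.mem_of_superset this fun c hc => key c ?_
  rwa [Metric.mem_closedBall, Real.dist_eq, sub_zero] at hc

lemma adm_univ : Adm X x₀ (fun _ => (Set.univ : Set (lip0 X x₀ ℝ))) :=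
  fun _ => ⟨Filter.univ_mem, convex_univ, balanced_univ⟩

lemma nG_hasBasis (f : lip0 X x₀ ℝ) :
    (nG X x₀ f).HasBasis (Adm X x₀) (fun U => (f + ·) '' gammaSet X x₀ ℝ U) := by
  refine Filter.hasBasis_biInf_principal' ?_ ⟨_, adm_univ⟩
  intro U hU V hV
  exact ⟨fun n => U n ∩ V n, hU.inter hV,
    Set.image_mono (gammaSet_mono fun n => Set.inter_subset_left),
    Set.image_mono (gammaSet_mono fun n => Set.inter_subset_right)⟩

lemma mem_nG {f : lip0 X x₀ ℝ} {s : Set (lip0 X x₀ ℝ)} :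
    s ∈ nG X x₀ f ↔ ∃ U, Adm X x₀ U ∧ ∀ a ∈ gammaSet X x₀ ℝ U, f + a ∈ s := by
  rw [(nG_hasBasis f).mem_iff]
  constructor
  · rintro ⟨U, hU, hsub⟩
    exact ⟨U, hU, fun a ha => hsub ⟨a, ha, rfl⟩⟩
  · rintro ⟨U, hU, h⟩
    refine ⟨U, hU, ?_⟩
    rintro _ ⟨a, ha, rfl⟩
    exact h a ha

lemma pure_le_nG (f : lip0 X x₀ ℝ) : pure f ≤ nG X x₀ f := by
  intro s hs
  rcases mem_nG.1 hs with ⟨U, hU, h⟩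
  have := h 0 (zero_mem_gammaSet hU)
  rwa [add_zero] at this
  
lemma nhds_tauGamma (f : lip0 X x₀ ℝ) :
    @nhds _ (tauGamma X x₀ ℝ) f = nG X x₀ f := by
  rw [tauGamma_eq_mkOfNhds]
  refine TopologicalSpace.nhds_mkOfNhds _ _ (fun g => pure_le_nG g) ?_
  intro a s hs
  rcases mem_nG.1 hs with ⟨U, hU, h⟩
  have hmem : (a + ·) '' gammaSet X x₀ ℝ (halve U) ∈ nG X x₀ a :=
    (nG_hasBasis a).mem_of_mem hU.halve
  refine Filter.mem_of_superset hmem ?_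
  rintro _ ⟨b, hb, rfl⟩
  show s ∈ nG X x₀ (a + b)
  rw [mem_nG]
  refine ⟨halve U, hU.halve, fun c hc => ?_⟩
  rw [show a + b + c = a + (b + c) by abel]
  exact h _ (halve_add hU hb hc)

lemma nG_map_add (f : lip0 X x₀ ℝ) :
    nG X x₀ f = Filter.map (f + ·) (nG X x₀ 0) := by
  refine Filter.ext fun s => ?_
  rw [Filter.mem_map, mem_nG, mem_nG]
  refine exists_congr fun U => and_congr_right fun _ => forall₂_congr fun a _ => ?_
  rw [Set.mem_preimage]
  constructor
  · intro h; rwa [zero_add]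
  · intro h; rwa [zero_add] at h

lemma tauGamma_addGroup :
    @IsTopologicalAddGroup (lip0 X x₀ ℝ) (tauGamma X x₀ ℝ) _ := by
  letI := tauGamma X x₀ ℝ
  have hn : ∀ f : lip0 X x₀ ℝ, nhds f = nG X x₀ f := nhds_tauGamma
  refine IsTopologicalAddGroup.of_comm_of_nhds_zero ?_ ?_ ?_
  · simp only [hn]
    intro s hs
    rcases mem_nG.1 hs with ⟨U, hU, h⟩
    rw [Filter.mem_map, Filter.mem_prod_iff]
    refine ⟨(0 + ·) '' gammaSet X x₀ ℝ (halve U),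
      (nG_hasBasis 0).mem_of_mem hU.halve,
      (0 + ·) '' gammaSet X x₀ ℝ (halve U),
      (nG_hasBasis 0).mem_of_mem hU.halve, ?_⟩
    rintro ⟨x, y⟩ ⟨⟨b, hb, rfl⟩, ⟨c, hc, rfl⟩⟩
    have : Function.uncurry (· + ·) ((0 : lip0 X x₀ ℝ) + b, (0 : lip0 X x₀ ℝ) + c)
        = 0 + (b + c) := by
      simp [Function.uncurry]
    rw [Set.mem_preimage, this]
    exact h _ (halve_add hU hb hc)
  · simp only [hn]
    intro s hs
    rcases mem_nG.1 hs with ⟨U, hU, h⟩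
    rw [Filter.mem_map, mem_nG]
    refine ⟨U, hU, fun a ha => ?_⟩
    rw [Set.mem_preimage]
    have hna : -a ∈ gammaSet X x₀ ℝ U := by
      have := (gammaSet_balanced hU).smul_mem (a := (-1 : ℝ)) (by norm_num) ha
      rwa [neg_one_smul] at this
    have := h (-a) hna
    rwa [show 0 + -a = -(0 + a) by abel] at this
  · intro f
    simp only [hn]
    exact nG_map_add f

lemma tauGamma_continuousSMul :
    @ContinuousSMul ℝ (lip0 X x₀ ℝ) _ _ (tauGamma X x₀ ℝ) := by
  letI := tauGamma X x₀ ℝ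
  haveI := tauGamma_addGroup (X := X) (x₀ := x₀)
  have hn : ∀ f : lip0 X x₀ ℝ, nhds f = nG X x₀ f := nhds_tauGamma
  refine ContinuousSMul.of_nhds_zero ?_ ?_ ?_
  · simp only [hn]
    intro s hs
    rcases mem_nG.1 hs with ⟨U, hU, h⟩
    rw [Filter.mem_map, Filter.mem_prod_iff]
    refine ⟨Metric.closedBall 0 1, Metric.closedBall_mem_nhds 0 one_pos,
      (0 + ·) '' gammaSet X x₀ ℝ U,
      (nG_hasBasis 0).mem_of_mem hU, ?_⟩
    rintro ⟨c, y⟩ ⟨hc, ⟨a, ha, rfl⟩⟩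
    rw [Set.mem_preimage]
    have hca : c • a ∈ gammaSet X x₀ ℝ U := by
      refine (gammaSet_balanced hU).smul_mem ?_ ha
      rwa [← mem_closedBall_zero_iff]
    have := h _ hca
    rwa [show (0 : lip0 X x₀ ℝ) + c • a = c • ((0 : lip0 X x₀ ℝ) + a) by
      rw [zero_add, zero_add]] at this
  · intro m
    simp only [hn]
    intro s hs
    rcases mem_nG.1 hs with ⟨U, hU, h⟩
    rw [Filter.mem_map]
    refine Filter.mem_of_superset (gammaSet_absorbs hU m) fun c hc => ?_
    rw [Set.mem_preimage]
    have := h _ hc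
    rwa [zero_add] at this
  · intro c
    rcases eq_or_ne c 0 with rfl | hc
    · have : (fun m : lip0 X x₀ ℝ => (0 : ℝ) • m) = fun _ => (0 : lip0 X x₀ ℝ) := by
        funext m; rw [zero_smul]
      rw [this]
      simp only [hn]
      intro s hs
      have h0 : (0 : lip0 X x₀ ℝ) ∈ s := mem_pure.1 (pure_le_nG 0 hs)
      simp [Filter.mem_map, h0, Set.preimage_const]
    · simp only [hn]
      intro s hs
      rcases mem_nG.1 hs with ⟨U, hU, h⟩
      obtain ⟨k, hk⟩ := pow_unbounded_of_one_lt |c| (by norm_num : (1 : ℝ) < 2)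
      have hadm : Adm X x₀ (fun i => c⁻¹ • U (i + k)) :=
        Adm.smul (fun i => hU (i + k)) (inv_ne_zero hc)
      rw [Filter.mem_map]
      refine Filter.mem_of_superset ((nG_hasBasis 0).mem_of_mem hadm) ?_
      rintro _ ⟨a, ha, rfl⟩
      rw [Set.mem_preimage]
      have : c • a ∈ gammaSet X x₀ ℝ U :=
        gammaSet_smul_subset hU hc (le_of_lt hk) ha
      have := h _ this
      rwa [show (0 : lip0 X x₀ ℝ) + c • a = c • ((0 : lip0 X x₀ ℝ) + a) by
        rw [zero_add, zero_add]] at this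

lemma tauGamma_locallyConvex :
    @LocallyConvexSpace ℝ (lip0 X x₀ ℝ) _ _ _ _ (tauGamma X x₀ ℝ) := by
  letI := tauGamma X x₀ ℝ
  haveI := tauGamma_addGroup (X := X) (x₀ := x₀)
  refine LocallyConvexSpace.ofBasisZero ℝ (lip0 X x₀ ℝ)
    (fun U => (0 + ·) '' gammaSet X x₀ ℝ U) (Adm X x₀) ?_ ?_
  · rw [show (nhds (0 : lip0 X x₀ ℝ)) = nG X x₀ 0 from nhds_tauGamma 0]
    exact nG_hasBasis 0
  · exact fun U hU => (gammaSet_convex hU).translate 0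

lemma nhds_tau0_map (f : lip0 X x₀ ℝ) :
    @nhds _ (tau0 X x₀ ℝ) f = Filter.map (f + ·) (@nhds _ (tau0 X x₀ ℝ) 0) := by
  letI := tau0 X x₀ ℝ
  haveI := tau0_topologicalAddGroup (X := X) (x₀ := x₀)
  exact (map_add_left_nhds_zero f).symm

lemma sum_halves (n : ℕ) :
    ∑ i ∈ Finset.range (n + 1), ((2 : ℝ)⁻¹) ^ (i + 1) = 1 - (2⁻¹ : ℝ) ^ (n + 1) := by
  induction n with
  | zero => norm_num
  | succ n ih => rw [Finset.sum_range_succ, ih]; ring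

lemma tauGamma_le_tau0' : tauGamma X x₀ ℝ ≤ tau0 X x₀ ℝ := by
  rw [le_iff_nhds]
  intro f
  rw [nhds_tauGamma, nhds_tau0_map]
  intro s hs
  rw [Filter.mem_map] at hs
  obtain ⟨K, ε, hK, hε, hsub⟩ := exists_cN_subset hs
  rw [mem_nG]
  refine ⟨fun i => cN x₀ K (((2 : ℝ)⁻¹) ^ (i + 1) * ε),
    fun i => ⟨cN_mem_nhds hK (by positivity), cN_convex _ _, cN_balanced _ _⟩, ?_⟩
  intro a ha
  refine hsub ?_
  obtain ⟨n, g, hg, rfl⟩ := gammaSet_rec ha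
  intro x hx
  rw [toFun'_sum]
  calc |∑ i ∈ Finset.range (n + 1), toFun' (g i) x|
      ≤ ∑ i ∈ Finset.range (n + 1), |toFun' (g i) x| :=
        Finset.abs_sum_le_sum_abs _ _
    _ ≤ ∑ i ∈ Finset.range (n + 1), ((2 : ℝ)⁻¹) ^ (i + 1) * ε := by
        refine Finset.sum_le_sum fun i hi => ?_
        rw [Finset.mem_range] at hi
        exact (hg i (by omega)).1 x hx
    _ = (∑ i ∈ Finset.range (n + 1), ((2 : ℝ)⁻¹) ^ (i + 1)) * ε := by
        rw [Finset.sum_mul]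
    _ ≤ 1 * ε := by
        refine mul_le_mul_of_nonneg_right ?_ (le_of_lt hε)
        rw [sum_halves]
        have : (0 : ℝ) < (2⁻¹ : ℝ) ^ (n + 1) := by positivity
        linarith
    _ = ε := one_mul _

lemma normTop_le_tauGamma' :
    (inferInstance : TopologicalSpace (lip0 X x₀ ℝ)) ≤ tauGamma X x₀ ℝ := by
  rw [le_iff_nhds]
  intro f
  rw [nhds_tauGamma]
  intro s hs
  rcases mem_nG.1 hs with ⟨U, hU, h⟩
  obtain ⟨K, ε, hK, hε, hsub⟩ := exists_cN_subset (hU 0).1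
  obtain ⟨R, hR⟩ := hK.isBounded.subset_closedBall x₀
  set δ : ℝ := min 1 (ε / (|R| + 1)) with hδ
  have hδpos : 0 < δ := lt_min one_pos (by positivity)
  have hball : Metric.closedBall f δ ⊆ s := by
    intro g hg
    have h1 : ‖g - f‖ ≤ δ := by
      rw [← dist_eq_norm]
      exact Metric.mem_closedBall.1 hg
    have h2 : g - f ∈ cN x₀ K ε := by
      intro x hx
      have hfx : |toFun' (g - f) x| ≤ ‖g - f‖ * dist x x₀ := by
        have := norm_sub_le_lipNorm (x₀ := x₀) (g - f) x x₀
        rw [apply_base (g - f), sub_zero] at this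
        simpa [lip0_norm_def] using this
      calc |toFun' (g - f) x| ≤ ‖g - f‖ * dist x x₀ := hfx
        _ ≤ δ * (|R| + 1) := by
            refine mul_le_mul h1 ?_ dist_nonneg (le_of_lt hδpos)
            have := hR hx
            rw [Metric.mem_closedBall] at this
            calc dist x x₀ ≤ R := this
              _ ≤ |R| := le_abs_self R
              _ ≤ |R| + 1 := by linarith
        _ ≤ (ε / (|R| + 1)) * (|R| + 1) := by
            refine mul_le_mul_of_nonneg_right (min_le_right _ _) (by positivity)
        _ = ε := by field_simp
    have h3 : g - f ∈ gammaSet X x₀ ℝ U := by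
      refine single_mem_gammaSet hU 0 (hsub h2) ?_
      rw [pow_zero]
      exact h1.trans (min_le_left _ _)
    have := h _ h3
    rwa [show f + (g - f) = g by abel] at this
  exact Filter.mem_of_superset (Metric.closedBall_mem_nhds f hδpos) hball

lemma induced_eq_on_bounded {B : Set (lip0 X x₀ ℝ)} (hB : NormBounded X x₀ ℝ B) :
    TopologicalSpace.induced ((↑) : B → lip0 X x₀ ℝ) (tauGamma X x₀ ℝ)
      = TopologicalSpace.induced ((↑) : B → lip0 X x₀ ℝ) (tau0 X x₀ ℝ) := by
  obtain ⟨C, hC⟩ := hB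
  refine le_antisymm (induced_mono tauGamma_le_tau0') ?_
  rw [le_iff_nhds]
  intro b
  rw [@nhds_induced (lip0 X x₀ ℝ) _ (tau0 X x₀ ℝ) _ b,
    @nhds_induced (lip0 X x₀ ℝ) _ (tauGamma X x₀ ℝ) _ b, nhds_tauGamma]
  set f : lip0 X x₀ ℝ := (b : lip0 X x₀ ℝ) with hf
  intro s hs
  obtain ⟨t, ht, hts⟩ := Filter.mem_comap.1 hs
  rcases mem_nG.1 ht with ⟨U, hU, h⟩
  have hCpos : 0 ≤ C := le_trans (norm_nonneg f) (hC f b.2)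
  obtain ⟨m, hm⟩ := pow_unbounded_of_one_lt (2 * C) (by norm_num : (1 : ℝ) < 2)
  refine Filter.mem_comap.2 ⟨(f + ·) '' U m, ?_, ?_⟩
  · rw [nhds_tau0_map]
    exact Filter.image_mem_map (hU m).1
  · intro b' hb'
    obtain ⟨a, ha, hae⟩ := hb'
    have hnorm : ‖a‖ ≤ 2 ^ m := by
      have h1 : a = (b' : lip0 X x₀ ℝ) - f := by
        rw [← hae]
        show a = f + a - f
        abel
      have h2 : ‖(b' : lip0 X x₀ ℝ) - f‖ ≤ 2 * C := by
        calc ‖(b' : lip0 X x₀ ℝ) - f‖ ≤ ‖(b' : lip0 X x₀ ℝ)‖ + ‖f‖ := norm_sub_le _ _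
          _ ≤ C + C := add_le_add (hC _ b'.2) (hC f b.2)
          _ = 2 * C := by ring
      rw [h1]
      exact h2.trans (le_of_lt hm)
    have : a ∈ gammaSet X x₀ ℝ U := single_mem_gammaSet hU m ha hnorm
    have hmem2 := h a this
    have hbt : (b' : lip0 X x₀ ℝ) ∈ t := by rw [← hae]; exact hmem2
    exact hts hbt

lemma tauGamma_le_of_good (t : TopologicalSpace (lip0 X x₀ ℝ))
    (ht1 : @IsTopologicalAddGroup (lip0 X x₀ ℝ) t _)
    (ht2 : @ContinuousSMul ℝ (lip0 X x₀ ℝ) _ _ t)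
    (ht3 : @LocallyConvexSpace ℝ (lip0 X x₀ ℝ) _ _ _ _ t)
    (ht4 : ∀ B : Set (lip0 X x₀ ℝ), NormBounded X x₀ ℝ B →
      TopologicalSpace.induced ((↑) : B → lip0 X x₀ ℝ) t =
        TopologicalSpace.induced ((↑) : B → lip0 X x₀ ℝ) (tau0 X x₀ ℝ)) :
    tauGamma X x₀ ℝ ≤ t := by
  rw [le_iff_nhds]
  intro f
  rw [nhds_tauGamma]
  have hmap : @nhds _ t f = Filter.map (f + ·) (@nhds _ t 0) := by
    letI := t; haveI := ht1
    exact (map_add_left_nhds_zero f).symm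
  rw [hmap]
  intro s hs
  rw [Filter.mem_map] at hs
  have hbas : (@nhds _ t (0 : lip0 X x₀ ℝ)).HasBasis
      (fun W : Set (lip0 X x₀ ℝ) => W ∈ @nhds _ t 0 ∧ Convex ℝ W) id := by
    letI := t; haveI := ht3
    exact LocallyConvexSpace.convex_basis_zero ℝ (lip0 X x₀ ℝ)
  obtain ⟨W, ⟨hW0, hWc⟩, hWsub⟩ := hbas.mem_iff.1 hs
  have h0W : (0 : lip0 X x₀ ℝ) ∈ W := by
    letI := t
    exact mem_of_mem_nhds hW0
  have hVn : ∀ n : ℕ, ∃ V : Set (lip0 X x₀ ℝ),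
      (V ∈ @nhds _ (tau0 X x₀ ℝ) 0 ∧ Convex ℝ V ∧ Balanced ℝ V) ∧
      ∀ g : lip0 X x₀ ℝ, ‖g‖ ≤ 2 ^ n → g ∈ V → g ∈ ((2 : ℝ)⁻¹) ^ (n + 1) • W := by
    intro n
    have hsm : ((2 : ℝ)⁻¹) ^ (n + 1) • W ∈ @nhds _ t (0 : lip0 X x₀ ℝ) := by
      letI := t; haveI := ht1; haveI := ht2
      have hcne : ((2 : ℝ)⁻¹) ^ (n + 1) ≠ 0 := by positivity
      have := (smul_mem_nhds_smul_iff₀ (c := ((2 : ℝ)⁻¹) ^ (n + 1))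
        (s := W) (x := (0 : lip0 X x₀ ℝ)) hcne).2 hW0
      rwa [smul_zero] at this
    set Bn : Set (lip0 X x₀ ℝ) := {g | ‖g‖ ≤ 2 ^ n} with hBn
    have hBnb : NormBounded X x₀ ℝ Bn := ⟨2 ^ n, fun g hg => hg⟩
    have h0B : (0 : lip0 X x₀ ℝ) ∈ Bn := by
      simp only [hBn, Set.mem_setOf_eq, norm_zero]
      positivity
    have hcomap : Filter.comap (Subtype.val : Bn → lip0 X x₀ ℝ) (@nhds _ t 0)
        = Filter.comap Subtype.val (@nhds _ (tau0 X x₀ ℝ) 0) := by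
      have e1 := @nhds_induced (lip0 X x₀ ℝ) Bn t Subtype.val ⟨0, h0B⟩
      have e2 := @nhds_induced (lip0 X x₀ ℝ) Bn (tau0 X x₀ ℝ) Subtype.val ⟨0, h0B⟩
      rw [ht4 Bn hBnb] at e1
      rw [← e1, ← e2]
    have hmem : Subtype.val ⁻¹' (((2 : ℝ)⁻¹) ^ (n + 1) • W)
        ∈ Filter.comap (Subtype.val : Bn → lip0 X x₀ ℝ) (@nhds _ (tau0 X x₀ ℝ) 0) := by
      rw [← hcomap]
      exact Filter.preimage_mem_comap hsm
    obtain ⟨A, hA, hAsub⟩ := Filter.mem_comap.1 hmem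
    obtain ⟨K, ε, hK, hε, hKsub⟩ := exists_cN_subset hA
    refine ⟨cN x₀ K ε, ⟨cN_mem_nhds hK hε, cN_convex _ _, cN_balanced _ _⟩, ?_⟩
    intro g hgn hgV
    have : (⟨g, hgn⟩ : Bn) ∈ Subtype.val ⁻¹' A := hKsub hgV
    exact hAsub this
  choose V hV hVprop using hVn
  rw [mem_nG]
  refine ⟨V, fun n => hV n, ?_⟩
  intro a ha
  refine hWsub ?_
  show a ∈ W
  obtain ⟨n, g, hg, rfl⟩ := gammaSet_rec ha
  set cw : ℕ → ℝ := fun i => if i ≤ n then ((2 : ℝ)⁻¹) ^ (i + 1) else ((2 : ℝ)⁻¹) ^ (n + 1)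
    with hcw
  have hgW : ∀ i, i ≤ n → g i ∈ ((2 : ℝ)⁻¹) ^ (i + 1) • W :=
    fun i hi => hVprop i (g i) (hg i hi).2 (hg i hi).1
  have key : ∀ i, ∃ z ∈ W, (i ≤ n → ((2 : ℝ)⁻¹) ^ (i + 1) • z = g i) := by
    intro i
    by_cases hi : i ≤ n
    · obtain ⟨z, hz, hze⟩ := Set.mem_smul_set.1 (hgW i hi)
      exact ⟨z, hz, fun _ => hze⟩
    · exact ⟨0, h0W, fun h => absurd h hi⟩
  choose z hz hze using key
  set zz : ℕ → lip0 X x₀ ℝ := fun i => if i ≤ n then z i else 0 with hzz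
  have hsum : ∑ i ∈ Finset.range (n + 1), g i
      = ∑ i ∈ Finset.range (n + 2), cw i • zz i := by
    have hlast : cw (n + 1) • zz (n + 1) = 0 := by
      rw [hzz]
      simp only [show ¬ (n + 1 ≤ n) by omega, if_false, smul_zero]
    rw [show n + 2 = (n + 1) + 1 from rfl, Finset.sum_range_succ (fun i => cw i • zz i) (n + 1),
      hlast, add_zero]
    refine Finset.sum_congr rfl fun i hi => ?_
    rw [Finset.mem_range] at hi
    have hin : i ≤ n := by omega
    rw [hcw, hzz]
    simp only [hin, if_pos]
    exact (hze i hin).symm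
  rw [hsum]
  refine hWc.sum_mem ?_ ?_ ?_
  · intro i _
    simp only [hcw]
    by_cases hi : i ≤ n
    · rw [if_pos hi]; positivity
    · rw [if_neg hi]; positivity
  · rw [hcw]
    rw [Finset.sum_range_succ]
    have h1 : ∑ i ∈ Finset.range (n + 1),
        (if i ≤ n then ((2 : ℝ)⁻¹) ^ (i + 1) else ((2 : ℝ)⁻¹) ^ (n + 1))
        = ∑ i ∈ Finset.range (n + 1), ((2 : ℝ)⁻¹) ^ (i + 1) := by
      refine Finset.sum_congr rfl fun i hi => ?_
      rw [Finset.mem_range] at hi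
      rw [if_pos (by omega)]
    rw [h1, sum_halves, if_neg (by omega)]
    ring
  · intro i _
    rw [hzz]
    by_cases hi : i ≤ n
    · simp only [hi, if_pos]
      exact hz i
    · simp only [hi, if_false]
      exact h0W

end Aux

/-- For a pointed metric space `X`, on `Lip₀(X)` one has
`τ₀ ⊆ τ_γ ⊆ τ_Lip` (recall that in Mathlib's order on topologies, finer = smaller),
and `τ_γ` is the largest (finest) locally convex topology on `Lip₀(X)` which coincides
with `τ₀` on each norm-bounded subset of `Lip₀(X)`. -/
theorem stmt0 (X : Type*) [MetricSpace X] (x₀ : X) :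
    tauGamma X x₀ ℝ ≤ tau0 X x₀ ℝ ∧
    (inferInstance : TopologicalSpace (lip0 X x₀ ℝ)) ≤ tauGamma X x₀ ℝ ∧
    IsLeast
      {t : TopologicalSpace (lip0 X x₀ ℝ) |
        @IsTopologicalAddGroup _ t _ ∧ @ContinuousSMul ℝ _ _ _ t ∧
        @LocallyConvexSpace ℝ _ _ _ _ _ t ∧
        ∀ B : Set (lip0 X x₀ ℝ), NormBounded X x₀ ℝ B →
          TopologicalSpace.induced ((↑) : B → lip0 X x₀ ℝ) t =
            TopologicalSpace.induced ((↑) : B → lip0 X x₀ ℝ) (tau0 X x₀ ℝ)}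
      (tauGamma X x₀ ℝ) := by
  refine ⟨tauGamma_le_tau0', normTop_le_tauGamma',
    ⟨⟨tauGamma_addGroup, tauGamma_continuousSMul, tauGamma_locallyConvex,
      fun B hB => induced_eq_on_bounded hB⟩, ?_⟩⟩
  rintro t ⟨ht1, ht2, ht3, ht4⟩
  exact tauGamma_le_of_good t ht1 ht2 ht3 ht4

end LipApprox
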